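/- Let Δ be a simplicial complex. If Δ is shifted (i.e., F_d(Δ) is a shifted family for every d ≥ 1), then Inc(Δ) is a shifted complex; if Δ is compressed (i.e., F_d(Δ) is a compressed family for every d ≥ 1), then Inc(Δ) is a compressed complex. -/

import Mathlib

def Inc1 : Set (ℕ → ℕ) := {π | StrictMono π ∧ ∀ j, π j ≤ j + 1}

def incF (F : Set (Finset ℕ)) : Set (Finset ℕ) :=
  {v | ∃ u ∈ F, ∃ π ∈ Inc1, v = u.image π}

def compressionIn (A : Set ℕ) (d n : ℕ) : Set (Finset ℕ) :=
  {v | ↑v ⊆ A ∧ v.card = d ∧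
    {w : Finset ℕ | ↑w ⊆ A ∧ w.card = d ∧ toColex w ≤ toColex v}.ncard ≤ n}

def IsCompressedIn (A : Set ℕ) (d : ℕ) (F : Set (Finset ℕ)) : Prop :=
  (∀ u ∈ F, ↑u ⊆ A ∧ u.card = d) ∧
  ∀ u ∈ F, ∀ v : Finset ℕ, ↑v ⊆ A → v.card = d → toColex v ≤ toColex u → v ∈ F

def hatL (F : Set (Finset ℕ)) (k : ℕ) : Set (Finset ℕ) :=
  {u | (∀ x ∈ u, k < x) ∧ insert k u ∈ F}

def hatR (F : Set (Finset ℕ)) (k : ℕ) : Set (Finset ℕ) :=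
  {u | (∀ x ∈ u, x < k) ∧ insert k u ∈ F}

def leftComp (d : ℕ) (F : Set (Finset ℕ)) : Set (Finset ℕ) :=
  ⋃ k : ℕ, {v | ∃ w ∈ compressionIn {j | k < j} (d - 1) (hatL F k).ncard, v = insert k w}

def rightComp (d : ℕ) (F : Set (Finset ℕ)) : Set (Finset ℕ) :=
  ⋃ k : ℕ, {v | ∃ w ∈ compressionIn Set.univ (d - 1) (hatR F k).ncard, v = insert k w}

def BorelLE (u v : Finset ℕ) : Prop :=
  List.Forall₂ (· ≤ ·) (u.sort (· ≤ ·)) (v.sort (· ≤ ·))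

def IsShifted (F : Set (Finset ℕ)) : Prop :=
  ∀ u ∈ F, ∀ v, BorelLE v u → v ∈ F

def piShift (i : ℕ) : ℕ → ℕ := fun j => if j < i then j else j + 1

def IsBinRep (d m s : ℕ) (a : ℕ → ℕ) : Prop :=
  1 ≤ s ∧ s ≤ d ∧ (∀ i, s ≤ i → i < d → a i < a (i + 1)) ∧ s ≤ a s ∧
    m = ∑ i ∈ Finset.Icc s d, Nat.choose (a i) i

def famLE (F G : Set (Finset ℕ)) : Prop :=
  F = G ∨ ∃ m ∈ G, m ∉ F ∧
    ∀ w : Finset ℕ, (w ∈ F ∧ w ∉ G) ∨ (w ∈ G ∧ w ∉ F) → toColex w ≤ toColex m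

def IsSimplicialComplex (Δ : Set (Finset ℕ)) : Prop :=
  Δ.Finite ∧ ∀ F ∈ Δ, ∀ G ⊆ F, G ∈ Δ







-- abbreviations
def auxSLE (l m : List ℕ) : Prop := List.Forall₂ (· ≤ ·) l m
def auxPLE (l m : List ℕ) : Prop := List.Forall₂ (fun x y => y ≤ x + 1) l m

lemma aux_piShift_strictMono (i : ℕ) : StrictMono (piShift i) := by
  intro a b hab
  unfold piShift
  split <;> split <;> omega

lemma aux_piShift_mem (i : ℕ) : piShift i ∈ Inc1 :=
  ⟨aux_piShift_strictMono i, fun j => by unfold piShift; split <;> omega⟩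

lemma aux_id_mem : (id : ℕ → ℕ) ∈ Inc1 := ⟨fun _ _ h => h, fun j => by simp⟩

lemma aux_inc1_lb {π : ℕ → ℕ} (hπ : π ∈ Inc1) (j : ℕ) : j ≤ π j := by
  induction j with
  | zero => exact Nat.zero_le _
  | succ n ih => exact Nat.lt_of_le_of_lt ih (hπ.1 (Nat.lt_succ_self n))

lemma aux_sorted_map {l : List ℕ} {f : ℕ → ℕ} (hf : StrictMono f) (h : l.Pairwise (· < ·)) :
    (l.map f).Pairwise (· < ·) := by
  rw [List.pairwise_map]
  exact h.imp fun h' => hf h'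

lemma aux_toFinset_map (l : List ℕ) (π : ℕ → ℕ) : (l.map π).toFinset = l.toFinset.image π := by
  induction l with
  | nil => simp
  | cons a l ih => simp [ih]

lemma aux_sort_toFinset {l : List ℕ} (h : l.Pairwise (· < ·)) : l.toFinset.sort (· ≤ ·) = l :=
  (List.toFinset_sort (r := (· ≤ ·)) h.nodup).mpr (h.imp le_of_lt)

lemma aux_card_toFinset {l : List ℕ} (h : l.Pairwise (· < ·)) : l.toFinset.card = l.length :=
  List.toFinset_card_of_nodup h.nodup

lemma aux_sort_image (u : Finset ℕ) {π : ℕ → ℕ} (hπ : StrictMono π) :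
    (u.image π).sort (· ≤ ·) = (u.sort (· ≤ ·)).map π := by
  have hs := aux_sorted_map hπ (u.sortedLT_sort.pairwise)
  rw [← aux_sort_toFinset hs, aux_toFinset_map, Finset.sort_toFinset]

lemma aux_toFinset_concat (l : List ℕ) (x : ℕ) : (l ++ [x]).toFinset = insert x l.toFinset := by
  ext y; simp [or_comm]

lemma aux_f2_concat {R : ℕ → ℕ → Prop} {l₁ l₂ : List ℕ} {a b : ℕ} :
    List.Forall₂ R (l₁ ++ [a]) (l₂ ++ [b]) ↔ List.Forall₂ R l₁ l₂ ∧ R a b := by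
  rw [← List.forall₂_reverse_iff, List.reverse_append, List.reverse_append]
  simp only [List.reverse_singleton, List.singleton_append, List.forall₂_cons,
    List.forall₂_reverse_iff]
  exact and_comm

lemma aux_sorted_concat {l : List ℕ} {a : ℕ} :
    (l ++ [a]).Pairwise (· < ·) ↔ l.Pairwise (· < ·) ∧ ∀ y ∈ l, y < a := by
  rw [List.pairwise_append]
  simp
open Finset.Colex


lemma aux_sum_mono {l m : List ℕ} (h : List.Forall₂ (· ≤ ·) l m) :
    (l.map (2 ^ ·)).sum ≤ (m.map (2 ^ ·)).sum := by
  induction h with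
  | nil => simp
  | cons h _ ih => simpa using Nat.add_le_add (Nat.pow_le_pow_right (by norm_num) h) ih

lemma aux_borel_colex {l m : List ℕ} (hl : l.Nodup) (hm : m.Nodup)
    (h : List.Forall₂ (· ≤ ·) l m) :
    toColex l.toFinset ≤ toColex m.toFinset := by
  rw [← Finset.geomSum_le_geomSum_iff_toColex_le_toColex (le_refl 2)]
  rw [List.sum_toFinset _ hl, List.sum_toFinset _ hm]
  exact aux_sum_mono h

lemma aux_colex_mem_mono {s t : Finset ℕ} (h : toColex s ≤ toColex t) {a : ℕ} (ha : a ∈ s) :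
    ∃ b ∈ t, a ≤ b := by
  by_cases hat : a ∈ t
  · exact ⟨a, hat, le_refl a⟩
  · obtain ⟨b, hb, _, hab⟩ := h ha hat
    exact ⟨b, hb, hab⟩

lemma aux_colex_insert {s t : Finset ℕ} {a : ℕ} (ha : a ∉ s) (hb : a ∉ t) :
    toColex (insert a s) ≤ toColex (insert a t) ↔ toColex s ≤ toColex t := by
  have h := toColex_sdiff_le_toColex_sdiff
    (u := {a}) (s := insert a s) (t := insert a t) (by simp) (by simp)
  rw [show insert a s \ {a} = s by simp [Finset.sdiff_singleton_eq_erase, ha],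
    show insert a t \ {a} = t by simp [Finset.sdiff_singleton_eq_erase, hb]] at h
  exact h.symm

lemma aux_colex_bound {s t : Finset ℕ} {a : ℕ} (hs : ∀ x ∈ s, x < a) (ht : a ∈ t) :
    toColex s ≤ toColex t := by
  intro x hx hxt
  exact ⟨a, ht, fun h => lt_irrefl a (hs a h), (hs x hx).le⟩


lemma auxL2 : ∀ (a : List ℕ) (w : List ℕ) (c : ℕ), a.Pairwise (· < ·) → w.Pairwise (· < ·) →
    List.Forall₂ (· ≤ ·) a w → List.Forall₂ (fun x y => y ≤ x + 1) a w → (∀ z ∈ a, c ≤ z) →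
    ∃ b i, b.Pairwise (· < ·) ∧ List.Forall₂ (· ≤ ·) b a ∧ (∀ z ∈ b, c ≤ z) ∧ c ≤ i ∧
      w = b.map (piShift i) := by
  intro a
  induction a with
  | nil =>
    intro w c _ _ hS _ _
    rw [List.forall₂_nil_left_iff] at hS
    subst hS
    exact ⟨[], c, List.Pairwise.nil, List.Forall₂.nil, by simp, le_refl c, rfl⟩
  | cons x a' ih =>
    intro w c hsa hsw hS hP hc
    obtain ⟨y, w', hxy, hS', rfl⟩ := List.forall₂_cons_left_iff.mp hS
    rw [List.forall₂_cons] at hP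
    obtain ⟨hyx, hP'⟩ := hP
    rw [List.pairwise_cons] at hsa hsw
    obtain ⟨hax, hsa'⟩ := hsa
    obtain ⟨hwy, hsw'⟩ := hsw
    have hcx : c ≤ x := hc x (by simp)
    by_cases hyeq : y = x + 1
    · -- full shift case
      subst hyeq
      have hwlb : ∀ z ∈ (x + 1) :: w', x + 1 ≤ z := by
        intro z hz
        rcases List.mem_cons.mp hz with rfl | hz'
        · exact le_refl _
        · exact (hwy z hz').le
      refine ⟨((x+1) :: w').map (· - 1), x, ?_, ?_, ?_, hcx, ?_⟩
      · rw [List.pairwise_map]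
        refine List.Pairwise.imp_of_mem ?_ (List.pairwise_cons.mpr ⟨hwy, hsw'⟩)
        intro p q hp hq hpq
        have := hwlb p hp
        omega
      · rw [List.forall₂_map_left_iff]
        rw [List.forall₂_cons]
        refine ⟨by omega, ?_⟩
        refine (hP'.imp ?_).flip
        intro p q h
        show q - 1 ≤ p
        omega
      · intro z hz
        simp only [List.mem_map] at hz
        obtain ⟨t, ht, rfl⟩ := hz
        have := hwlb t ht
        omega
      · rw [List.map_map]
        symm
        refine (List.map_congr_left ?_).trans (List.map_id _)
        intro t ht
        have h1 := hwlb t ht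
        simp only [Function.comp_apply, piShift, id_eq]
        rw [if_neg (by omega)]
        omega
    · -- y = x
      have hyx2 : y = x := by omega
      subst hyx2
      obtain ⟨b', i, hbs, hble, hblb, hile, hw'⟩ :=
        ih w' (y + 1) hsa' hsw' hS' hP' (fun z hz => hax z hz)
      refine ⟨y :: b', i, ?_, ?_, ?_, by omega, ?_⟩
      · rw [List.pairwise_cons]
        exact ⟨fun z hz => lt_of_lt_of_le (Nat.lt_succ_self y) (hblb z hz), hbs⟩
      · exact List.Forall₂.cons (le_refl y) hble
      · intro z hz
        rcases List.mem_cons.mp hz with rfl | hz'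
        · exact hcx
        · exact le_trans (by omega) (hblb z hz')
      · simp only [List.map_cons]
        rw [show piShift i y = y from by simp only [piShift]; rw [if_pos (by omega)]]
        rw [hw']

lemma auxF2memR {R : ℕ → ℕ → Prop} : ∀ {l m : List ℕ}, List.Forall₂ R l m →
    ∀ z ∈ m, ∃ y ∈ l, R y z := by
  intro l m h
  induction h with
  | nil => simp
  | cons h _ ih =>
    intro z hz
    rcases List.mem_cons.mp hz with rfl | hz'
    · exact ⟨_, by simp, h⟩
    · obtain ⟨y, hy, hyz⟩ := ih z hz'
      exact ⟨y, by simp [hy], hyz⟩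

lemma auxMemZip : ∀ (v u : List ℕ) (t : ℕ), t ∈ List.zipWith min v u →
    ∃ a ∈ v, ∃ b ∈ u, t = min a b := by
  intro v
  induction v with
  | nil => simp
  | cons x v' ih =>
    intro u t ht
    cases u with
    | nil => simp at ht
    | cons z u' =>
      simp only [List.zipWith_cons_cons, List.mem_cons] at ht
      rcases ht with rfl | ht'
      · exact ⟨x, by simp, z, by simp, rfl⟩
      · obtain ⟨a, ha, b, hb, rfl⟩ := ih u' t ht'
        exact ⟨a, by simp [ha], b, by simp [hb], rfl⟩

lemma auxMinSorted : ∀ (v u : List ℕ), v.Pairwise (· < ·) → u.Pairwise (· < ·) →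
    (List.zipWith min v u).Pairwise (· < ·) := by
  intro v
  induction v with
  | nil => simp
  | cons x v' ih =>
    intro u hv hu
    cases u with
    | nil => simp
    | cons z u' =>
      rw [List.pairwise_cons] at hv hu
      simp only [List.zipWith_cons_cons]
      rw [List.pairwise_cons]
      refine ⟨?_, ih u' hv.2 hu.2⟩
      intro t ht
      obtain ⟨a, ha, b, hb, rfl⟩ := auxMemZip v' u' t ht
      exact lt_min ((min_le_left x z).trans_lt (hv.1 a ha)) ((min_le_right x z).trans_lt (hu.1 b hb))

lemma auxMinLe : ∀ (v u w : List ℕ), List.Forall₂ (· ≤ ·) v w → List.Forall₂ (· ≤ ·) u w →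
    List.Forall₂ (fun x y => y ≤ x + 1) u w →
    List.Forall₂ (· ≤ ·) (List.zipWith min v u) v ∧
    List.Forall₂ (· ≤ ·) (List.zipWith min v u) u ∧
    List.Forall₂ (fun x y => y ≤ x + 1) (List.zipWith min v u) v := by
  intro v
  induction v with
  | nil =>
    intro u w hv hu _
    rw [List.forall₂_nil_left_iff] at hv
    subst hv
    rw [List.forall₂_nil_right_iff] at hu
    subst hu
    simp
  | cons x v' ih =>
    intro u w hv hu hp
    obtain ⟨y, w', hxy, hv', rfl⟩ := List.forall₂_cons_left_iff.mp hv
    cases u with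
    | nil => rw [List.forall₂_nil_left_iff] at hu; simp at hu
    | cons z u' =>
      rw [List.forall₂_cons] at hu hp
      obtain ⟨h1, h2, h3⟩ := ih u' w' hv' hu.2 hp.2
      have hzy := hu.1
      have hyz := hp.1
      simp only [List.zipWith_cons_cons]
      refine ⟨List.Forall₂.cons (min_le_left x z) h1,
        List.Forall₂.cons (min_le_right x z) h2,
        List.Forall₂.cons (by omega) h3⟩

def decL (k : ℕ) : List ℕ → List ℕ
  | [] => []
  | x :: l => max k (x - 1) :: decL (k + 1) l

lemma decL_length : ∀ (l : List ℕ) (k : ℕ), (decL k l).length = l.length := by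
  intro l
  induction l with
  | nil => intro k; rfl
  | cons x l ih => intro k; simp [decL, ih]

lemma decL_mem : ∀ (l : List ℕ) (k : ℕ) (t : ℕ), t ∈ decL k l →
    ∃ j, j < l.length ∧ ∃ z ∈ l, t = max (k + j) (z - 1) := by
  intro l
  induction l with
  | nil => simp [decL]
  | cons x l ih =>
    intro k t ht
    rcases List.mem_cons.mp ht with rfl | ht'
    · exact ⟨0, by simp, x, by simp, by simp⟩
    · obtain ⟨j, hj, z, hz, rfl⟩ := ih (k + 1) t ht'
      exact ⟨j + 1, by simp; omega, z, by simp [hz], by rw [show k + 1 + j = k + (j + 1) by omega]⟩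

lemma decL_SLE : ∀ (l : List ℕ) (k : ℕ), l.Pairwise (· < ·) → (∀ z ∈ l, k ≤ z) →
    List.Forall₂ (· ≤ ·) (decL k l) l := by
  intro l
  induction l with
  | nil => intro k _ _; exact List.Forall₂.nil
  | cons x l ih =>
    intro k hs hk
    rw [List.pairwise_cons] at hs
    have hx := hk x (by simp)
    refine List.Forall₂.cons (by omega) (ih (k + 1) hs.2 fun z hz => ?_)
    have := hs.1 z hz
    omega

lemma decL_PLE : ∀ (l : List ℕ) (k : ℕ),
    List.Forall₂ (fun x y => y ≤ x + 1) (decL k l) l := by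
  intro l
  induction l with
  | nil => intro k; exact List.Forall₂.nil
  | cons x l ih =>
    intro k
    exact List.Forall₂.cons (by omega) (ih (k + 1))

lemma decL_sorted : ∀ (l : List ℕ) (k : ℕ), l.Pairwise (· < ·) →
    (decL k l).Pairwise (· < ·) := by
  intro l
  induction l with
  | nil => intro k _; exact List.Pairwise.nil
  | cons x l ih =>
    intro k hs
    rw [List.pairwise_cons] at hs
    simp only [decL]
    rw [List.pairwise_cons]
    refine ⟨?_, ih (k + 1) hs.2⟩
    intro t ht
    obtain ⟨j, hj, z, hz, rfl⟩ := decL_mem l (k + 1) t ht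
    have hzx : x < z := hs.1 z hz
    exact max_lt (by omega) (by omega)

lemma decL_upper : ∀ (l : List ℕ) (k A : ℕ), (∀ z ∈ l, z ≤ A) → k + l.length ≤ A →
    ∀ t ∈ decL k l, t < A := by
  intro l k A hA hlen t ht
  obtain ⟨j, hj, z, hz, rfl⟩ := decL_mem l k t ht
  have := hA z hz
  exact max_lt (by omega) (by omega)

lemma auxKEY : ∀ (n : ℕ) (u v w : List ℕ), u.length = n → u.Pairwise (· < ·) → v.Pairwise (· < ·) →
    w.Pairwise (· < ·) → List.Forall₂ (· ≤ ·) u w → List.Forall₂ (fun x y => y ≤ x + 1) u w →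
    v.length = w.length →
    toColex v.toFinset ≤ toColex w.toFinset →
    ∃ u', u'.Pairwise (· < ·) ∧ u'.length = n ∧
      toColex u'.toFinset ≤ toColex u.toFinset ∧
      List.Forall₂ (· ≤ ·) u' v ∧ List.Forall₂ (fun x y => y ≤ x + 1) u' v := by
  intro n
  induction n with
  | zero =>
    intro u v w hlen _ _ _ hS _ hvw _
    have hu : u = [] := List.length_eq_zero_iff.mp hlen
    subst hu
    rw [List.forall₂_nil_left_iff] at hS
    subst hS
    have hv : v = [] := List.length_eq_zero_iff.mp hvw
    subst hv
    exact ⟨[], List.Pairwise.nil, rfl, le_refl _, List.Forall₂.nil, List.Forall₂.nil⟩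
  | succ n ih =>
    intro u v w hlen hsu hsv hsw hS hP hvw hcol
    have hwlen : w.length = n + 1 := by rw [← hS.length_eq, hlen]
    have hvlen : v.length = n + 1 := by rw [hvw, hwlen]
    rcases List.eq_nil_or_concat u with rfl | ⟨u₀, a, rfl⟩
    · simp at hlen
    rcases List.eq_nil_or_concat w with rfl | ⟨w₀, b, rfl⟩
    · simp at hwlen
    rcases List.eq_nil_or_concat v with rfl | ⟨v₀, c, rfl⟩
    · simp at hvlen
    simp only [List.concat_eq_append] at *
    have hu0len : u₀.length = n := by simpa using hlen
    have hw0len : w₀.length = n := by simpa using hwlen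
    have hv0len : v₀.length = n := by simpa using hvlen
    obtain ⟨hS0, hab⟩ := aux_f2_concat.mp hS
    obtain ⟨hP0, hba⟩ := aux_f2_concat.mp hP
    obtain ⟨hsu0, hua⟩ := aux_sorted_concat.mp hsu
    obtain ⟨hsw0, hwb⟩ := aux_sorted_concat.mp hsw
    obtain ⟨hsv0, hvc⟩ := aux_sorted_concat.mp hsv
    -- c ≤ b
    have hcb : c ≤ b := by
      obtain ⟨y, hy, hcy⟩ := aux_colex_mem_mono (a := c) hcol
        (by rw [List.mem_toFinset]; exact List.mem_append_right _ (by simp))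
      rw [List.mem_toFinset] at hy
      rcases List.mem_append.mp hy with hy' | hy'
      · exact hcy.trans (hwb y hy').le
      · simp at hy'
        omega
    by_cases hceq : c = b
    · -- equal tops : recurse
      subst hceq
      have hcv0 : c ∉ v₀.toFinset := by
        rw [List.mem_toFinset]
        intro h
        exact lt_irrefl c (hvc c h)
      have hcw0 : c ∉ w₀.toFinset := by
        rw [List.mem_toFinset]
        intro h
        exact lt_irrefl c (hwb c h)
      rw [aux_toFinset_concat, aux_toFinset_concat] at hcol
      have hcol0 := (aux_colex_insert hcv0 hcw0).mp hcol
      obtain ⟨u'₀, hs', hlen', hcol', hSLE', hPLE'⟩ :=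
        ih u₀ v₀ w₀ hu0len hsu0 hsv0 hsw0 hS0 hP0 (by omega) hcol0
      have helts : ∀ y ∈ u'₀, y < a := by
        intro y hy
        obtain ⟨z, hz, hyz⟩ := aux_colex_mem_mono hcol' (by rwa [List.mem_toFinset])
        rw [List.mem_toFinset] at hz
        exact hyz.trans_lt (hua z hz)
      refine ⟨u'₀ ++ [a], aux_sorted_concat.mpr ⟨hs', helts⟩, by simp [hlen'], ?_, ?_, ?_⟩
      · rw [aux_toFinset_concat, aux_toFinset_concat]
        refine (aux_colex_insert ?_ ?_).mpr hcol'
        · rw [List.mem_toFinset]; intro h; exact lt_irrefl a (helts a h)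
        · rw [List.mem_toFinset]; intro h; exact lt_irrefl a (hua a h)
      · exact aux_f2_concat.mpr ⟨hSLE', by omega⟩
      · exact aux_f2_concat.mpr ⟨hPLE', by omega⟩
    · -- c < b
      have hcb' : c < b := lt_of_le_of_ne hcb hceq
      have hca : c ≤ a := by omega
      have hvle : ∀ z ∈ v₀ ++ [c], z ≤ a := by
        intro z hz
        rcases List.mem_append.mp hz with hz' | hz'
        · exact (hvc z hz').le.trans hca
        · simp at hz'; omega
      by_cases han : a ≤ n
      · -- degenerate: u = v = range (n+1)
        have hule : ∀ z ∈ u₀ ++ [a], z < n + 1 := by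
          intro z hz
          rcases List.mem_append.mp hz with hz' | hz'
          · have := hua z hz'; omega
          · simp at hz'; omega
        have hvle' : ∀ z ∈ v₀ ++ [c], z < n + 1 := fun z hz => by
          have := hvle z hz; omega
        have hueq : (u₀ ++ [a]).toFinset = Finset.range (n + 1) := by
          apply Finset.eq_of_subset_of_card_le
          · intro z hz
            rw [List.mem_toFinset] at hz
            rw [Finset.mem_range]
            exact hule z hz
          · rw [aux_card_toFinset hsu, hlen, Finset.card_range]
        have hveq : (v₀ ++ [c]).toFinset = Finset.range (n + 1) := by
          apply Finset.eq_of_subset_of_card_le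
          · intro z hz
            rw [List.mem_toFinset] at hz
            rw [Finset.mem_range]
            exact hvle' z hz
          · rw [aux_card_toFinset hsv, hvlen, Finset.card_range]
        have huv : u₀ ++ [a] = v₀ ++ [c] := by
          rw [← aux_sort_toFinset hsu, ← aux_sort_toFinset hsv, hueq, hveq]
        refine ⟨v₀ ++ [c], hsv, by omega, ?_, ?_, ?_⟩
        · rw [huv]
        · exact List.forall₂_same.mpr fun x _ => le_refl x
        · exact List.forall₂_same.mpr fun x _ => by omega
      · -- main: decrement construction
        refine ⟨decL 0 (v₀ ++ [c]), decL_sorted _ 0 hsv, by rw [decL_length]; omega, ?_,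
          decL_SLE _ 0 hsv (fun z _ => Nat.zero_le z), decL_PLE _ 0⟩
        apply aux_colex_bound (a := a)
        · intro t ht
          rw [List.mem_toFinset] at ht
          exact decL_upper _ 0 a hvle (by omega) t ht
        · rw [List.mem_toFinset]
          exact List.mem_append_right _ (by simp)

lemma aux_image_interval (u : Finset ℕ) {π : ℕ → ℕ} (hπ : π ∈ Inc1) :
    List.Forall₂ (· ≤ ·) (u.sort (· ≤ ·)) ((u.image π).sort (· ≤ ·)) ∧
    List.Forall₂ (fun x y => y ≤ x + 1) (u.sort (· ≤ ·)) ((u.image π).sort (· ≤ ·)) := by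
  rw [aux_sort_image u hπ.1]
  constructor
  · rw [List.forall₂_map_right_iff]
    exact List.forall₂_same.mpr fun x _ => aux_inc1_lb hπ x
  · rw [List.forall₂_map_right_iff]
    exact List.forall₂_same.mpr fun x _ => hπ.2 x

lemma aux_incF_of_list {Δ : Set (Finset ℕ)} {b : List ℕ}
    (hb : b.toFinset ∈ Δ) (i : ℕ) {v : Finset ℕ} (hv : v.sort (· ≤ ·) = b.map (piShift i)) :
    v ∈ incF Δ := by
  refine ⟨b.toFinset, hb, piShift i, aux_piShift_mem i, ?_⟩
  have h : v = (b.map (piShift i)).toFinset := by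
    rw [← hv, Finset.sort_toFinset]
  rw [h, aux_toFinset_map]

theorem stmt16 (Δ : Set (Finset ℕ)) (h : IsSimplicialComplex Δ) :
    ((∀ d : ℕ, 1 ≤ d → IsShifted {u ∈ Δ | u.card = d}) →
      ∀ d : ℕ, 1 ≤ d → IsShifted {u ∈ incF Δ | u.card = d}) ∧
    ((∀ d : ℕ, 1 ≤ d → IsCompressedIn Set.univ d {u ∈ Δ | u.card = d}) →
      ∀ d : ℕ, 1 ≤ d → IsCompressedIn Set.univ d {u ∈ incF Δ | u.card = d}) := by
  constructor
  · -- shifted part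
    intro hsh d hd w hw v hBor
    obtain ⟨hwF, hwcard⟩ := hw
    obtain ⟨u, huΔ, π, hπ, rfl⟩ := hwF
    have hucard : u.card = d := by
      rw [← hwcard, Finset.card_image_of_injective u hπ.1.injective]
    obtain ⟨hSuw, hPuw⟩ := aux_image_interval u hπ
    have hBor' : List.Forall₂ (· ≤ ·) (v.sort (· ≤ ·)) ((u.image π).sort (· ≤ ·)) := hBor
    have hvcard : v.card = d := by
      have h := hBor'.length_eq
      rw [Finset.length_sort, Finset.length_sort] at h
      rw [h, hwcard]
    obtain ⟨h1, h2, h3⟩ := auxMinLe _ _ _ hBor' hSuw hPuw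
    have hms : (List.zipWith min (v.sort (· ≤ ·)) (u.sort (· ≤ ·))).Pairwise (· < ·) :=
      auxMinSorted _ _ (v.sortedLT_sort.pairwise) (u.sortedLT_sort.pairwise)
    have hMslice : (List.zipWith min (v.sort (· ≤ ·)) (u.sort (· ≤ ·))).toFinset ∈
        {u ∈ Δ | u.card = d} := by
      apply hsh d hd u ⟨huΔ, hucard⟩
      show List.Forall₂ _ _ _
      rw [aux_sort_toFinset hms]
      exact h2
    obtain ⟨b, i, hbs, hbm, _, _, hmap⟩ :=
      auxL2 _ (v.sort (· ≤ ·)) 0 hms (v.sortedLT_sort.pairwise) h1 h3 (fun z _ => Nat.zero_le z)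
    have hBslice : b.toFinset ∈ {u ∈ Δ | u.card = d} := by
      apply hsh d hd _ hMslice
      show List.Forall₂ _ _ _
      rw [aux_sort_toFinset hbs, aux_sort_toFinset hms]
      exact hbm
    exact ⟨aux_incF_of_list hBslice.1 i hmap, hvcard⟩
  · -- compressed part
    intro hcp d hd
    refine ⟨fun u hu => ⟨Set.subset_univ _, hu.2⟩, ?_⟩
    intro w hw v _ hvcard hcol
    obtain ⟨hwF, hwcard⟩ := hw
    obtain ⟨u, huΔ, π, hπ, rfl⟩ := hwF
    have hucard : u.card = d := by
      rw [← hwcard, Finset.card_image_of_injective u hπ.1.injective]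
    obtain ⟨hSuw, hPuw⟩ := aux_image_interval u hπ
    have hcpd := hcp d hd
    obtain ⟨u', hs', hlen', hcol', hSLE', hPLE'⟩ :=
      auxKEY d (u.sort (· ≤ ·)) (v.sort (· ≤ ·)) ((u.image π).sort (· ≤ ·))
        (by rw [Finset.length_sort, hucard]) (u.sortedLT_sort.pairwise) (v.sortedLT_sort.pairwise)
        ((u.image π).sortedLT_sort.pairwise) hSuw hPuw
        (by rw [Finset.length_sort, Finset.length_sort, hvcard, hwcard])
        (by rw [Finset.sort_toFinset, Finset.sort_toFinset]; exact hcol)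
    rw [Finset.sort_toFinset] at hcol'
    have hu'card : u'.toFinset.card = d := by rw [aux_card_toFinset hs', hlen']
    have hu'slice : u'.toFinset ∈ {u ∈ Δ | u.card = d} :=
      hcpd.2 u ⟨huΔ, hucard⟩ u'.toFinset (Set.subset_univ _) hu'card hcol'
    obtain ⟨b, i, hbs, hbu', _, _, hmap⟩ :=
      auxL2 u' (v.sort (· ≤ ·)) 0 hs' (v.sortedLT_sort.pairwise) hSLE' hPLE' (fun z _ => Nat.zero_le z)
    have hbcard : b.toFinset.card = d := by
      rw [aux_card_toFinset hbs, hbu'.length_eq, hlen']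
    have hbslice : b.toFinset ∈ {u ∈ Δ | u.card = d} :=
      hcpd.2 u'.toFinset hu'slice b.toFinset (Set.subset_univ _) hbcard
        (aux_borel_colex hbs.nodup hs'.nodup hbu')
    exact ⟨aux_incF_of_list hbslice.1 i hmap, hvcard⟩
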